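/- Let q be a prime power, and let α be an element of the algebraic closure of F_q. Suppose Tr_{F_{q^m}/F_q}(α) = 0 and Tr_{F_{q^n}/F_q}(α) = 0, where Tr denotes the trace polynomial x + x^q + ... + x^{q^{k-1}} evaluated at α. If gcd(m,n) = 1, then α = 0. -/

import Mathlib

/-- If `α` in an algebraic closure of `𝔽_q` (q = p^e) satisfies
`Tr_m(α) = α + α^q + ⋯ + α^{q^{m-1}} = 0` and `Tr_n(α) = 0` with `gcd(m,n) = 1`,
then `α = 0`. -/
theorem stmt_0 (p e : ℕ) [Fact p.Prime] (he : 0 < e) (q : ℕ) (hq : q = p ^ e)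
    (m n : ℕ) (hm : 0 < m) (hn : 0 < n) (hcop : Nat.gcd m n = 1)
    (α : AlgebraicClosure (GaloisField p e))
    (h1 : ∑ i ∈ Finset.range m, α ^ q ^ i = 0)
    (h2 : ∑ i ∈ Finset.range n, α ^ q ^ i = 0) :
    α = 0 := by
  set T : ℕ → AlgebraicClosure (GaloisField p e) := fun k => ∑ i ∈ Finset.range k, α ^ q ^ i with hT
  have hq0 : 0 < q := by rw [hq]; exact pow_pos (Fact.out (p := p.Prime)).pos e
  have hadd : ∀ a b, T (a + b) = T a + (T b) ^ q ^ a := by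
    intro a b
    have : (T b) ^ q ^ a = ∑ i ∈ Finset.range b, α ^ q ^ (a + i) := by
      rw [hT]
      simp only [hq, ← pow_mul, ← pow_mul']
      rw [sum_pow_char_pow]
      congr 1; funext i
      rw [← pow_mul, ← pow_add]
      congr 1
      ring
    rw [this, hT]
    simpa using Finset.sum_range_add (fun i => α ^ q ^ i) a b
  have hmul : ∀ c k, T k = 0 → T (c * k) = 0 := by
    intro c k hk
    induction c with
    | zero => simp [hT]
    | succ c ih =>
      have : (c + 1) * k = c * k + k := by ring
      rw [this, hadd, ih, hk, zero_pow (pow_ne_zero _ hq0.ne'), add_zero]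
  rcases eq_or_lt_of_le (show 1 ≤ n from hn) with h1n | h1n
  · -- n = 1
    have : T 1 = 0 := by rw [← h1n] at h2; simpa [hT] using h2
    simpa [hT] using this
  · obtain ⟨a, -, ha⟩ := Nat.exists_mul_mod_eq_one_of_coprime hcop h1n
    have hdiv : m * a = n * (m * a / n) + 1 := by
      conv_lhs => rw [← Nat.div_add_mod (m * a) n, ha]
    have h0 : T (m * a) = 0 := by
      rw [mul_comm]; exact hmul a m h1
    rw [hdiv, hadd] at h0
    have hbn : T (n * (m * a / n)) = 0 := by
      rw [mul_comm]; exact hmul _ n h2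
    rw [hbn, zero_add] at h0
    have : α ^ q ^ (n * (m * a / n)) = 0 := by simpa [hT] using h0
    exact pow_eq_zero_iff (pow_ne_zero _ hq0.ne') |>.mp this
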